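/- Let G be a finite directed acyclic graph with a unique sink z and let F be any field. Then G has a reversible pebbling with time at most t and space at most s if and only if the pebbling contradiction of G has a Nullstellensatz refutation over F of size at most t + 1 and degree at most s. -/

import Mathlib

open MvPolynomial

/-- A finite directed graph. -/
structure FinDigraph where
  V : Type
  [instFintype : Fintype V]
  Edge : V → V → Prop

attribute [instance] FinDigraph.instFintype

namespace FinDigraph

/-- The set of (immediate) predecessors of a vertex. -/
def pred (G : FinDigraph) (v : G.V) : Set G.V := {u | G.Edge u v}

/-- A directed graph is acyclic if no vertex reaches itself by a nonempty path. -/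
def Acyclic (G : FinDigraph) : Prop := ∀ v, ¬ Relation.TransGen G.Edge v v

/-- A sink is a vertex with no outgoing edge. -/
def IsSink (G : FinDigraph) (z : G.V) : Prop := ∀ u, ¬ G.Edge z u

/-- `z` is the unique sink of `G`. -/
def UniqueSink (G : FinDigraph) (z : G.V) : Prop :=
  G.IsSink z ∧ ∀ v, G.IsSink v → v = z

/-- One legal move of the reversible pebble game: place a pebble on a vertex all of whose
predecessors are pebbled, or remove a pebble from such a vertex. -/
def RevMove (G : FinDigraph) (P Q : Set G.V) : Prop :=
  ∃ v, G.pred v ⊆ P ∧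
    ((v ∉ P ∧ Q = insert v P) ∨ (v ∈ P ∧ Q = P \ {v}))

/-- One legal move of the standard pebble game: place a pebble on a vertex all of whose
predecessors are pebbled, or remove a pebble from an arbitrary vertex. -/
def StdMove (G : FinDigraph) (P Q : Set G.V) : Prop :=
  (∃ v, G.pred v ⊆ P ∧ v ∉ P ∧ Q = insert v P) ∨ (∃ v, v ∈ P ∧ Q = P \ {v})

/-- A reversible pebbling of `G` (with sink `z`) with time `t`. -/
def IsRevPebbling (G : FinDigraph) (z : G.V) (t : ℕ) (P : ℕ → Set G.V) : Prop :=
  P 0 = ∅ ∧ P t = ∅ ∧ (∃ i ≤ t, z ∈ P i) ∧ ∀ i < t, G.RevMove (P i) (P (i + 1))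

/-- A standard pebbling of `G` (with sink `z`) with time `t`. -/
def IsStdPebbling (G : FinDigraph) (z : G.V) (t : ℕ) (P : ℕ → Set G.V) : Prop :=
  P 0 = ∅ ∧ P t = ∅ ∧ (∃ i ≤ t, z ∈ P i) ∧ ∀ i < t, G.StdMove (P i) (P (i + 1))

/-- The space of a pebbling: the maximal number of pebbles in any configuration. -/
noncomputable def space (G : FinDigraph) (t : ℕ) (P : ℕ → Set G.V) : ℕ :=
  (Finset.range (t + 1)).sup fun i => (P i).ncard

end FinDigraph

/-- A Nullstellensatz certificate (refutation): `∑ i, r i * p i + ∑ j, s j * (X j ^ 2 - X j) = 1`. -/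
def IsNSCert {F σ ι : Type} [Field F] [Fintype σ] [Fintype ι]
    (p r : ι → MvPolynomial σ F) (s : σ → MvPolynomial σ F) : Prop :=
  ∑ i, r i * p i + ∑ j, s j * (X j ^ 2 - X j) = 1

/-- The size of a Nullstellensatz refutation:
`∑ i, m(r i) * m(p i) + ∑ j, 2 * m(s j)` where `m` counts monomials. -/
noncomputable def nsSize {F σ ι : Type} [Field F] [Fintype σ] [Fintype ι]
    (p r : ι → MvPolynomial σ F) (s : σ → MvPolynomial σ F) : ℕ :=
  ∑ i, (r i).support.card * (p i).support.card + ∑ j, 2 * (s j).support.card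

/-- The degree of a Nullstellensatz refutation: the maximum of the degrees of the
polynomials `r i * p i` and `s j * (X j ^ 2 - X j)`. -/
noncomputable def nsDegree {F σ ι : Type} [Field F] [Fintype σ] [Fintype ι]
    (p r : ι → MvPolynomial σ F) (s : σ → MvPolynomial σ F) : ℕ :=
  max (Finset.univ.sup fun i => (r i * p i).totalDegree)
    (Finset.univ.sup fun j => (s j * (X j ^ 2 - X j)).totalDegree)

/-- A polynomial is multilinear if every variable occurs with degree at most 1
in each of its monomials. -/
def Multilinear {F σ : Type} [Field F] (p : MvPolynomial σ F) : Prop :=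
  ∀ m ∈ p.support, ∀ j, m j ≤ 1

namespace FinDigraph

/-- The axiom `A_v = (1 - x_v) * ∏_{u ∈ pred(v)} x_u` of the pebbling contradiction. -/
noncomputable def pebAxiom (F : Type) [Field F] (G : FinDigraph) (v : G.V) :
    MvPolynomial G.V F :=
  (1 - X v) * ∏ u ∈ (G.pred v).toFinite.toFinset, X u

/-- The pebbling contradiction of `G` with sink `z`: the axioms `A_v` for every vertex `v`,
together with the sink axiom `A_sink = x_z`. -/
noncomputable def pebContradiction (F : Type) [Field F] (G : FinDigraph) (z : G.V) :
    Option G.V → MvPolynomial G.V F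
  | none => X z
  | some v => G.pebAxiom F v

end FinDigraph


set_option linter.unusedSectionVars false
namespace PebNS
variable {σ : Type} [DecidableEq σ] {F : Type} [Field F]

noncomputable def eS (S : Finset σ) : σ →₀ ℕ := ∑ v ∈ S, Finsupp.single v 1

lemma eS_apply (S : Finset σ) (v : σ) : eS S v = if v ∈ S then 1 else 0 := by
  classical
  simp [eS, Finset.sum_apply', Finsupp.single_apply, Finset.sum_ite_eq S v (fun _ => 1)]

lemma eS_support (S : Finset σ) : (eS S).support = S := by
  ext v; simp [Finsupp.mem_support_iff, eS_apply]

lemma eS_inj {S T : Finset σ} (h : eS S = eS T) : S = T := by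
  rw [← eS_support S, ← eS_support T, h]

lemma eS_degree (S : Finset σ) : ((eS S).sum fun _ e => e) = S.card := by
  classical
  rw [Finsupp.sum, eS_support]
  simp [eS_apply]

lemma eS_union (S T : Finset σ) (h : Disjoint S T) : eS (S ∪ T) = eS S + eS T := by
  rw [eS, Finset.sum_union h]; rfl

lemma eS_insert {S : Finset σ} {v : σ} (h : v ∉ S) :
    eS (insert v S) = eS S + Finsupp.single v 1 := by
  rw [eS, Finset.sum_insert h, add_comm]; rfl

noncomputable def monS (F : Type) [Field F] (S : Finset σ) : MvPolynomial σ F :=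
  monomial (eS S) 1

lemma monS_empty : monS F (∅ : Finset σ) = 1 := by
  simp [monS, eS]

lemma prod_X_eq_monS (S : Finset σ) : (∏ v ∈ S, (X v : MvPolynomial σ F)) = monS F S := by
  rw [monS, ← prod_X_pow_eq_monomial, eS_support]
  apply Finset.prod_congr rfl
  intro v hv; rw [eS_apply, if_pos hv, pow_one]

lemma monS_mul_monS {S T : Finset σ} (h : Disjoint S T) :
    monS F S * monS F T = monS F (S ∪ T) := by
  rw [monS, monS, monS, monomial_mul, one_mul, eS_union S T h]

lemma monS_mul_X {S : Finset σ} {v : σ} (h : v ∉ S) :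
    monS F S * X v = monS F (insert v S) := by
  rw [monS, monS, X, monomial_mul, one_mul, eS_insert h]

lemma totalDegree_monS (S : Finset σ) : (monS F S).totalDegree = S.card := by
  rw [monS, totalDegree_monomial _ one_ne_zero, eS_degree]

lemma support_monS (S : Finset σ) : (monS F S).support = {eS S} := by
  classical
  rw [monS, support_monomial, if_neg one_ne_zero]

end PebNS
namespace PebNS
open FinDigraph
variable {G : FinDigraph} [DecidableEq G.V] {F : Type} [Field F]

noncomputable def predF (G : FinDigraph) (v : G.V) : Finset G.V :=
  (G.pred v).toFinite.toFinset

lemma coe_predF (v : G.V) : (predF G v : Set G.V) = G.pred v := Set.Finite.coe_toFinset _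

lemma mem_predF {u v : G.V} : u ∈ predF G v ↔ G.Edge u v := by
  simp [predF, Set.Finite.mem_toFinset, pred, Set.mem_setOf_eq]

lemma not_mem_predF_self (hacy : G.Acyclic) (v : G.V) : v ∉ predF G v := by
  rw [mem_predF]
  exact fun h => hacy v (Relation.TransGen.single h)

lemma pebAxiom_eq (v : G.V) :
    G.pebAxiom F v = monS F (predF G v) - monS F (predF G v) * X v := by
  have h1 : (G.pred v).toFinite.toFinset = predF G v := rfl
  rw [pebAxiom, h1, prod_X_eq_monS]
  ring

lemma key_move {S : Finset G.V} {v : G.V} (hp : predF G v ⊆ S) (hv : v ∉ S) :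
    monS F (S \ predF G v) * G.pebAxiom F v = monS F S - monS F (insert v S) := by
  have hdisj : Disjoint (S \ predF G v) (predF G v) := Finset.sdiff_disjoint
  have hun : (S \ predF G v) ∪ predF G v = S := Finset.sdiff_union_of_subset hp
  rw [pebAxiom_eq, mul_sub, ← mul_assoc, monS_mul_monS hdisj, hun, monS_mul_X hv]

lemma support_monomial_sub {a b : G.V →₀ ℕ} (h : a ≠ b) :
    (monomial a (1:F) - monomial b 1).support = {a, b} := by
  classical
  ext d
  rw [MvPolynomial.mem_support_iff, MvPolynomial.coeff_sub, coeff_monomial, coeff_monomial]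
  rcases eq_or_ne a d with rfl | ha
  · rw [if_pos rfl, if_neg (Ne.symm h)]
    simp
  · rcases eq_or_ne b d with rfl | hb
    · simp [ha, Ne.symm ha]
    · simp [ha, hb, Ne.symm ha, Ne.symm hb]

lemma eS_ne_insert {S : Finset G.V} {v : G.V} (h : v ∉ S) : eS S ≠ eS (insert v S) := by
  intro he
  have := eS_inj he
  exact h (this ▸ Finset.mem_insert_self v S)

lemma pebAxiom_eq' (v : G.V) (h : v ∉ predF G v) :
    G.pebAxiom F v = monomial (eS (predF G v)) 1 - monomial (eS (insert v (predF G v))) 1 := by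
  rw [pebAxiom_eq, monS_mul_X h]; rfl

lemma support_pebAxiom (v : G.V) (h : v ∉ predF G v) :
    (G.pebAxiom F v).support = {eS (predF G v), eS (insert v (predF G v))} := by
  rw [pebAxiom_eq' v h, support_monomial_sub (eS_ne_insert h)]

lemma card_support_pebAxiom (v : G.V) (h : v ∉ predF G v) :
    (G.pebAxiom F v).support.card = 2 := by
  classical
  rw [support_pebAxiom v h, Finset.card_insert_of_notMem (by simpa using eS_ne_insert h),
    Finset.card_singleton]

lemma totalDegree_pebAxiom (v : G.V) (h : v ∉ predF G v) :
    (G.pebAxiom F v).totalDegree = (predF G v).card + 1 := by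
  classical
  rw [MvPolynomial.totalDegree, support_pebAxiom v h, Finset.sup_insert, Finset.sup_singleton,
    eS_degree, eS_degree, Finset.card_insert_of_notMem h]
  simp

end PebNS

namespace PebNS
open FinDigraph
section TD
variable {σ : Type} [DecidableEq σ] {F : Type} [Field F]

lemma exists_top (p : MvPolynomial σ F) (hp : p ≠ 0) :
    ∃ d ∈ p.support, (d.sum fun _ e => e) = p.totalDegree := by
  obtain ⟨d, hd, he⟩ := Finset.exists_mem_eq_sup p.support
    (Finset.nonempty_iff_ne_empty.mpr (fun h => hp (MvPolynomial.support_eq_empty.mp h)))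
    (fun m => m.sum fun _ e => e)
  exact ⟨d, hd, he.symm⟩

lemma sum_add_index (d b : σ →₀ ℕ) :
    ((d + b).sum fun _ e => e) = (d.sum fun _ e => e) + (b.sum fun _ e => e) :=
  Finsupp.sum_add_index' (fun _ => rfl) (fun _ _ _ => rfl)

lemma le_td_mul_monomial {p : MvPolynomial σ F} (hp : p ≠ 0) (b : σ →₀ ℕ) :
    p.totalDegree + (b.sum fun _ e => e) ≤ (p * monomial b 1).totalDegree := by
  obtain ⟨d, hd, he⟩ := exists_top p hp
  have hc : MvPolynomial.coeff (d + b) (p * monomial b 1) = MvPolynomial.coeff d p := by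
    rw [MvPolynomial.coeff_mul_monomial, mul_one]
  have hmem : d + b ∈ (p * monomial b 1).support := by
    rw [MvPolynomial.mem_support_iff, hc]
    exact MvPolynomial.mem_support_iff.mp hd
  calc p.totalDegree + (b.sum fun _ e => e) = ((d + b).sum fun _ e => e) := by
        rw [sum_add_index, he]
    _ ≤ _ := MvPolynomial.le_totalDegree hmem

lemma le_td_mul_one_sub_X {p : MvPolynomial σ F} (hp : p ≠ 0) (v : σ) :
    p.totalDegree + 1 ≤ (p * (1 - X v)).totalDegree := by
  obtain ⟨d, hd, he⟩ := exists_top p hp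
  have hds : ((d + Finsupp.single v 1).sum fun _ e => e) = p.totalDegree + 1 := by
    rw [sum_add_index, he, Finsupp.sum_single_index]; rfl
  have h1 : MvPolynomial.coeff (d + Finsupp.single v 1) p = 0 := by
    apply MvPolynomial.coeff_eq_zero_of_totalDegree_lt
    calc p.totalDegree < p.totalDegree + 1 := Nat.lt_succ_self _
      _ = _ := by rw [← hds]; rfl
  have h2 : MvPolynomial.coeff (d + Finsupp.single v 1) (p * X v) = MvPolynomial.coeff d p :=
    MvPolynomial.coeff_mul_X d v p
  have hc : MvPolynomial.coeff (d + Finsupp.single v 1) (p * (1 - X v)) =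
      - MvPolynomial.coeff d p := by
    rw [mul_sub, mul_one, MvPolynomial.coeff_sub, h1, h2, zero_sub]
  have hmem : d + Finsupp.single v 1 ∈ (p * (1 - X v)).support := by
    rw [MvPolynomial.mem_support_iff, hc]
    simpa using MvPolynomial.mem_support_iff.mp hd
  calc p.totalDegree + 1 = ((d + Finsupp.single v 1).sum fun _ e => e) := hds.symm
    _ ≤ _ := MvPolynomial.le_totalDegree hmem

lemma one_sub_X_ne_zero (v : σ) : (1 - X v : MvPolynomial σ F) ≠ 0 := by
  intro h
  have := congrArg (MvPolynomial.coeff 0) h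
  simp at this

end TD

lemma td_r_mul_pebAxiom {G : FinDigraph} [DecidableEq G.V] {F : Type} [Field F]
    {r : MvPolynomial G.V F} (hr : r ≠ 0) (v : G.V) :
    r.totalDegree + ((predF G v).card + 1) ≤ (r * G.pebAxiom F v).totalDegree := by
  have h1 : (G.pred v).toFinite.toFinset = predF G v := rfl
  have heq : r * G.pebAxiom F v = (r * (1 - X v)) * monomial (eS (predF G v)) 1 := by
    rw [pebAxiom, h1, prod_X_eq_monS, monS]; ring
  have hne : r * (1 - X v) ≠ 0 := mul_ne_zero hr (one_sub_X_ne_zero v)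
  calc r.totalDegree + ((predF G v).card + 1)
      = (r.totalDegree + 1) + ((eS (predF G v)).sum fun _ e => e) := by
        rw [eS_degree]; ring
    _ ≤ (r * (1 - X v)).totalDegree + ((eS (predF G v)).sum fun _ e => e) :=
        Nat.add_le_add_right (le_td_mul_one_sub_X hr v) _
    _ ≤ _ := by rw [heq]; exact le_td_mul_monomial hne _
end PebNS

namespace PebNS
section Phi
variable {σ : Type} [DecidableEq σ] {F : Type} [Field F]

noncomputable def phi (χ : (σ →₀ ℕ) → F) (p : MvPolynomial σ F) : F :=
  ∑ d ∈ p.support, χ d * MvPolynomial.coeff d p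

lemma phi_eq_sum_subset (χ : (σ →₀ ℕ) → F) {p : MvPolynomial σ F} {U : Finset (σ →₀ ℕ)}
    (hU : p.support ⊆ U) : phi χ p = ∑ d ∈ U, χ d * MvPolynomial.coeff d p := by
  apply Finset.sum_subset hU
  intro d _ hd
  rw [MvPolynomial.notMem_support_iff.mp hd, mul_zero]

lemma phi_zero (χ : (σ →₀ ℕ) → F) : phi χ 0 = 0 := by simp [phi]

lemma phi_add (χ : (σ →₀ ℕ) → F) (p q : MvPolynomial σ F) :
    phi χ (p + q) = phi χ p + phi χ q := by
  rw [phi_eq_sum_subset χ (MvPolynomial.support_add (p := p) (q := q)),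
    phi_eq_sum_subset χ (Finset.subset_union_left (s₁ := p.support) (s₂ := q.support)),
    phi_eq_sum_subset χ (Finset.subset_union_right (s₁ := p.support) (s₂ := q.support)),
    ← Finset.sum_add_distrib]
  apply Finset.sum_congr rfl
  intro d _
  rw [MvPolynomial.coeff_add]
  ring

lemma phi_neg (χ : (σ →₀ ℕ) → F) (p : MvPolynomial σ F) : phi χ (-p) = - phi χ p := by
  have h := phi_add χ p (-p)
  rw [add_neg_cancel, phi_zero] at h
  linear_combination -h

lemma phi_sub (χ : (σ →₀ ℕ) → F) (p q : MvPolynomial σ F) :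
    phi χ (p - q) = phi χ p - phi χ q := by
  rw [sub_eq_add_neg, phi_add, phi_neg]; ring

lemma phi_finsum (χ : (σ →₀ ℕ) → F) {ι : Type*} (A : Finset ι) (f : ι → MvPolynomial σ F) :
    phi χ (∑ i ∈ A, f i) = ∑ i ∈ A, phi χ (f i) := by
  classical
  induction A using Finset.induction_on with
  | empty => simp [phi_zero]
  | insert a A' hx ih =>
                    rw [Finset.sum_insert hx, phi_add, ih, Finset.sum_insert hx]

lemma phi_monomial (χ : (σ →₀ ℕ) → F) (d : σ →₀ ℕ) (c : F) :
    phi χ (monomial d c) = χ d * c := by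
  classical
  rcases eq_or_ne c 0 with rfl | hc
  · simp [phi_zero]
  · rw [phi, MvPolynomial.support_monomial, if_neg hc, Finset.sum_singleton,
      MvPolynomial.coeff_monomial, if_pos rfl]

lemma phi_mul_monomial (χ : (σ →₀ ℕ) → F) (p : MvPolynomial σ F) (b : σ →₀ ℕ) :
    phi χ (p * monomial b 1) = ∑ d ∈ p.support, χ (d + b) * MvPolynomial.coeff d p := by
  conv_lhs => rw [← MvPolynomial.support_sum_monomial_coeff p]
  rw [Finset.sum_mul, phi_finsum]
  apply Finset.sum_congr rfl
  intro d _
  rw [MvPolynomial.monomial_mul, mul_one, phi_monomial]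

lemma phi_mul_diff (χ : (σ →₀ ℕ) → F) (p : MvPolynomial σ F) (a b : σ →₀ ℕ)
    (h : ∀ d ∈ p.support, χ (d + a) = χ (d + b)) :
    phi χ (p * (monomial a 1 - monomial b 1)) = 0 := by
  rw [mul_sub, phi_sub, phi_mul_monomial, phi_mul_monomial]
  rw [sub_eq_zero]
  apply Finset.sum_congr rfl
  intro d hd
  rw [h d hd]

lemma nat_support_add (d e : σ →₀ ℕ) : (d + e).support = d.support ∪ e.support := by
  ext v
  simp only [Finsupp.mem_support_iff, Finset.mem_union, Finsupp.add_apply]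
  omega

lemma phi_one (χ : (σ →₀ ℕ) → F) : phi χ 1 = χ 0 := by
  have : (1 : MvPolynomial σ F) = monomial 0 1 := by simp
  rw [this, phi_monomial, mul_one]

end Phi
end PebNS

namespace PebNS
open FinDigraph
variable {G : FinDigraph} [DecidableEq G.V] {F : Type} [Field F]

/-- Finset version of a (finite) set of vertices. -/
noncomputable def fS (s : Set G.V) : Finset G.V := s.toFinite.toFinset

lemma mem_fS {s : Set G.V} {v : G.V} : v ∈ fS s ↔ v ∈ s := Set.Finite.mem_toFinset _

lemma card_fS (s : Set G.V) : (fS s).card = s.ncard :=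
  (Set.ncard_eq_toFinset_card s s.toFinite).symm

lemma fS_empty : fS (∅ : Set G.V) = ∅ := by ext v; simp [mem_fS]

lemma td_monS_sub_le (A B : Finset G.V) :
    (monS F A - monS F B).totalDegree ≤ max A.card B.card := by
  have h : monS F A - monS F B = monS F A + monomial (eS B) (-1 : F) := by
    rw [monS, monS, sub_eq_add_neg, map_neg]
  rw [h]
  refine le_trans (MvPolynomial.totalDegree_add _ _) ?_
  rw [totalDegree_monS, MvPolynomial.totalDegree_monomial _ (by norm_num : (-1 : F) ≠ 0),
    eS_degree]

lemma support_card_monS (A : Finset G.V) : (monS F A).support.card = 1 := by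
  rw [support_monS]; rfl

lemma cert_of_walk (hacy : G.Acyclic) (k : ℕ) (c : ℕ → Set G.V)
    (hmv : ∀ i < k, G.RevMove (c i) (c (i + 1))) :
    ∃ q : G.V → MvPolynomial G.V F,
      (∑ v, q v * G.pebAxiom F v) = monS F (fS (c 0)) - monS F (fS (c k)) ∧
      (∑ v, (q v).support.card) ≤ k ∧
      ∀ v, (q v * G.pebAxiom F v).totalDegree ≤
        (Finset.range (k + 1)).sup fun i => (c i).ncard := by
  induction k with
  | zero =>
    refine ⟨0, ?_, ?_, ?_⟩
    · simp
    · simp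
    · intro v; simp
  | succ k ih =>
    obtain ⟨q, hsum, hcard, hdeg⟩ := ih (fun i hi => hmv i (Nat.lt_succ_of_lt hi))
    obtain ⟨v₀, hpred, hcase⟩ := hmv k (Nat.lt_succ_self k)
    -- common facts
    have hsupmono : ((Finset.range (k + 1)).sup fun i => (c i).ncard) ≤
        (Finset.range (k + 2)).sup fun i => (c i).ncard :=
      Finset.sup_mono (Finset.range_subset_range.mpr (by omega))
    have hbnd : ∀ m, m ≤ k + 1 →
        (c m).ncard ≤ (Finset.range (k + 2)).sup fun i => (c i).ncard := by
      intro m hm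
      exact Finset.le_sup (f := fun i => (c i).ncard) (Finset.mem_range.mpr (by omega))
    -- in both cases we produce `tm` with the key properties
    have main : ∃ tm : MvPolynomial G.V F,
        tm * G.pebAxiom F v₀ = monS F (fS (c k)) - monS F (fS (c (k + 1))) ∧
        tm.support.card ≤ 1 := by
      rcases hcase with ⟨hv, hnext⟩ | ⟨hv, hnext⟩
      · -- placement
        have hpF : predF G v₀ ⊆ fS (c k) := by
          intro u hu; rw [mem_fS]; exact hpred (by rwa [mem_predF] at hu)
        have hvF : v₀ ∉ fS (c k) := fun h => hv (mem_fS.mp h)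
        have hins : fS (c (k + 1)) = insert v₀ (fS (c k)) := by
          ext u; simp [mem_fS, hnext]
        refine ⟨monS F (fS (c k) \ predF G v₀), ?_, le_of_eq (support_card_monS _)⟩
        rw [key_move hpF hvF, hins]
      · -- removal
        have hvv : v₀ ∉ predF G v₀ := not_mem_predF_self hacy v₀
        have hS' : fS (c (k + 1)) = fS (c k) \ {v₀} := by
          ext u; simp [mem_fS, hnext]
        have hpF : predF G v₀ ⊆ fS (c (k + 1)) := by
          intro u hu
          rw [hS', Finset.mem_sdiff]
          constructor
          · rw [mem_fS]; exact hpred (by rwa [mem_predF] at hu)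
          · simp only [Finset.mem_singleton]
            rintro rfl; exact hvv hu
        have hvF : v₀ ∉ fS (c (k + 1)) := by
          rw [hS']; simp
        have hins : insert v₀ (fS (c (k + 1))) = fS (c k) := by
          rw [hS']
          ext u
          simp only [Finset.mem_insert, Finset.mem_sdiff, Finset.mem_singleton, mem_fS]
          constructor
          · rintro (rfl | ⟨h1, _⟩)
            · exact hv
            · exact h1
          · intro hu
            by_cases h : u = v₀
            · exact Or.inl h
            · exact Or.inr ⟨hu, h⟩
        refine ⟨- monS F (fS (c (k + 1)) \ predF G v₀), ?_, ?_⟩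
        · rw [neg_mul, key_move hpF hvF, hins]; ring
        · rw [MvPolynomial.support_neg]
          exact le_of_eq (support_card_monS _)
    obtain ⟨tm, htm, htmcard⟩ := main
    refine ⟨fun w => if w = v₀ then q v₀ + tm else q w, ?_, ?_, ?_⟩
    · have hterm : ∀ w, (if w = v₀ then q v₀ + tm else q w) * G.pebAxiom F w =
          q w * G.pebAxiom F w + (if w = v₀ then tm * G.pebAxiom F v₀ else 0) := by
        intro w
        by_cases h : w = v₀
        · subst h; rw [if_pos rfl, if_pos rfl]; ring
        · rw [if_neg h, if_neg h, add_zero]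
      calc (∑ w, (if w = v₀ then q v₀ + tm else q w) * G.pebAxiom F w)
          = ∑ w, (q w * G.pebAxiom F w + (if w = v₀ then tm * G.pebAxiom F v₀ else 0)) :=
            Finset.sum_congr rfl (fun w _ => hterm w)
        _ = (∑ w, q w * G.pebAxiom F w) + ∑ w, (if w = v₀ then tm * G.pebAxiom F v₀ else 0) :=
            Finset.sum_add_distrib
        _ = (monS F (fS (c 0)) - monS F (fS (c k))) + tm * G.pebAxiom F v₀ := by
            rw [hsum, Finset.sum_ite_eq' Finset.univ v₀ (fun _ => tm * G.pebAxiom F v₀),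
              if_pos (Finset.mem_univ v₀)]
        _ = monS F (fS (c 0)) - monS F (fS (c (k + 1))) := by rw [htm]; ring
    · calc (∑ w, (if w = v₀ then q v₀ + tm else q w).support.card)
          ≤ ∑ w, ((q w).support.card + if w = v₀ then 1 else 0) := by
            apply Finset.sum_le_sum
            intro w _
            by_cases h : w = v₀
            · subst h
              rw [if_pos rfl, if_pos rfl]
              calc (q w + tm).support.card
                  ≤ ((q w).support ∪ tm.support).card :=
                    Finset.card_le_card MvPolynomial.support_add
                _ ≤ (q w).support.card + tm.support.card := Finset.card_union_le _ _
                _ ≤ (q w).support.card + 1 := by omega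
            · rw [if_neg h, if_neg h, add_zero]
        _ = (∑ w, (q w).support.card) + ∑ w, (if w = v₀ then 1 else 0) :=
            Finset.sum_add_distrib
        _ ≤ k + 1 := by
            rw [Finset.sum_ite_eq' Finset.univ v₀ (fun _ => 1), if_pos (Finset.mem_univ v₀)]
            omega
    · intro w
      dsimp only
      by_cases h : w = v₀
      · subst h
        rw [if_pos rfl, add_mul]
        refine le_trans (MvPolynomial.totalDegree_add _ _) (max_le ?_ ?_)
        · exact le_trans (hdeg _) hsupmono
        · rw [htm]
          refine le_trans (td_monS_sub_le _ _) (max_le ?_ ?_)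
          · rw [card_fS]; exact hbnd k (by omega)
          · rw [card_fS]; exact hbnd (k + 1) (by omega)
      · rw [if_neg h]
        exact le_trans (hdeg w) hsupmono

end PebNS

namespace PebNS
open FinDigraph
variable {G : FinDigraph} [DecidableEq G.V] {F : Type} [Field F]

lemma revMove_symm (hacy : G.Acyclic) {P Q : Set G.V} (h : G.RevMove P Q) : G.RevMove Q P := by
  obtain ⟨v, hp, ⟨hv, rfl⟩ | ⟨hv, rfl⟩⟩ := h
  · exact ⟨v, hp.trans (Set.subset_insert v P), Or.inr ⟨Set.mem_insert v P,
      (Set.insert_diff_self_of_notMem hv).symm⟩⟩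
  · have hvv : ∀ u ∈ G.pred v, u ≠ v := by
      rintro u hu rfl
      exact hacy u (Relation.TransGen.single hu)
    refine ⟨v, ?_, Or.inl ⟨?_, ?_⟩⟩
    · intro u hu
      exact ⟨hp hu, hvv u hu⟩
    · simp
    · rw [Set.insert_diff_singleton]
      exact (Set.insert_eq_self.mpr hv).symm

lemma forward_dir (hacy : G.Acyclic) (z : G.V) (t s : ℕ)
    (h : ∃ t' ≤ t, ∃ P : ℕ → Set G.V, G.IsRevPebbling z t' P ∧ G.space t' P ≤ s) :
    ∃ (r : Option G.V → MvPolynomial G.V F) (s' : G.V → MvPolynomial G.V F),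
      IsNSCert (G.pebContradiction F z) r s' ∧
      nsSize (G.pebContradiction F z) r s' ≤ t + 1 ∧
      nsDegree (G.pebContradiction F z) r s' ≤ s := by
  obtain ⟨t', ht', P, ⟨h0, hT, ⟨j, hj, hzj⟩, hmv⟩, hsp⟩ := h
  have hPcard : ∀ m, m ≤ t' → (P m).ncard ≤ s := by
    intro m hm
    refine le_trans ?_ hsp
    exact Finset.le_sup (f := fun i => (P i).ncard) (Finset.mem_range.mpr (by omega))
  -- choose the shorter half of the pebbling
  obtain ⟨k, c, hc0, hzk, h2k, hmoves, hspc⟩ :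
      ∃ (k : ℕ) (c : ℕ → Set G.V), c 0 = ∅ ∧ z ∈ c k ∧ 2 * k ≤ t' ∧
        (∀ i < k, G.RevMove (c i) (c (i + 1))) ∧ (∀ i ≤ k, (c i).ncard ≤ s) := by
    by_cases hcase : 2 * j ≤ t'
    · exact ⟨j, P, h0, hzj, hcase, fun i hi => hmv i (by omega),
        fun i hi => hPcard i (by omega)⟩
    · refine ⟨t' - j, fun i => P (t' - i), by show P (t' - 0) = ∅; rw [Nat.sub_zero]; exact hT,
        ?_, by omega, ?_, fun i hi => hPcard _ (by omega)⟩
      · show z ∈ P (t' - (t' - j))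
        have h5 : t' - (t' - j) = j := by omega
        rw [h5]; exact hzj
      · intro i hi
        have h1 : t' - (i + 1) + 1 = t' - i := by omega
        have h2 : G.RevMove (P (t' - (i + 1))) (P (t' - (i + 1) + 1)) := hmv _ (by omega)
        rw [h1] at h2
        exact revMove_symm hacy h2
  obtain ⟨q, hsum, hcard, hdeg⟩ := cert_of_walk (F := F) hacy k c hmoves
  have hzF : z ∈ fS (c k) := mem_fS.mpr hzk
  have hznot : z ∉ fS (c k) \ {z} := by simp
  have hins : insert z (fS (c k) \ {z}) = fS (c k) := by
    rw [Finset.sdiff_singleton_eq_erase, Finset.insert_erase hzF]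
  have hrz : monS F (fS (c k) \ {z}) * X z = monS F (fS (c k)) := by
    rw [monS_mul_X hznot, hins]
  refine ⟨fun o => o.elim (monS F (fS (c k) \ {z})) q, 0, ?_, ?_, ?_⟩
  · rw [IsNSCert, Fintype.sum_option]
    have hc0' : fS (c 0) = ∅ := by rw [hc0]; exact fS_empty
    simp only [Option.elim]
    have hax : ∀ v : G.V, G.pebContradiction F z (some v) = G.pebAxiom F v := fun _ => rfl
    have hnone : G.pebContradiction F z none = X z := rfl
    rw [hnone, hrz]
    have hax' : (∑ v, q v * G.pebContradiction F z (some v)) = ∑ v, q v * G.pebAxiom F v := rfl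
    rw [hax', hsum, hc0', monS_empty]
    simp only [Pi.zero_apply, zero_mul, Finset.sum_const_zero, add_zero]
    ring
  · rw [nsSize, Fintype.sum_option]
    have h1 : ((0 : MvPolynomial G.V F)).support.card = 0 := by simp
    have hXz : (G.pebContradiction F z none).support.card = 1 := by
      show (X z : MvPolynomial G.V F).support.card = 1
      rw [MvPolynomial.support_X]; rfl
    simp only [Option.elim, h1]
    have h2 : ∀ v : G.V, (G.pebContradiction F z (some v)).support.card = 2 := by
      intro v
      exact card_support_pebAxiom v (not_mem_predF_self hacy v)
    calc (monS F (fS (c k) \ {z})).support.card * (G.pebContradiction F z none).support.card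
          + ∑ v, (q v).support.card * (G.pebContradiction F z (some v)).support.card
          + ∑ _j : G.V, 2 * 0
        = 1 + (∑ v, (q v).support.card) * 2 := by
          rw [hXz, support_card_monS]
          simp [Finset.sum_mul]
          apply Finset.sum_congr rfl
          intro v _
          rw [h2 v]
      _ ≤ 1 + t := by
          have : (∑ v, (q v).support.card) * 2 ≤ k * 2 := by omega
          omega
      _ = t + 1 := by omega
  · rw [nsDegree]
    apply max_le
    · apply Finset.sup_le
      intro i _
      match i with
      | none =>
        show ((monS F (fS (c k) \ {z})) * (X z : MvPolynomial G.V F)).totalDegree ≤ s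
        rw [hrz, totalDegree_monS, card_fS]
        exact hspc k le_rfl
      | some v =>
        show (q v * G.pebAxiom F v).totalDegree ≤ s
        refine le_trans (hdeg v) ?_
        apply Finset.sup_le
        intro i hi
        exact hspc i (by simpa using Nat.lt_succ_iff.mp (Finset.mem_range.mp hi))
    · apply Finset.sup_le
      intro i _
      simp

end PebNS

namespace PebNS
open FinDigraph
variable {G : FinDigraph} [DecidableEq G.V] {F : Type} [Field F]

/-- Index type for certificate edges. -/
abbrev EIdx (G : FinDigraph) (F : Type) [Field F] (r : Option G.V → MvPolynomial G.V F) :=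
  Σ v : G.V, {d : G.V →₀ ℕ // d ∈ (r (some v)).support}

/-- Specification of the edge `e` connecting configurations `S` and `T`. -/
def ESpec (r : Option G.V → MvPolynomial G.V F) (e : EIdx G F r) (S T : Finset G.V) : Prop :=
  e.1 ∉ (e.2 : G.V →₀ ℕ).support ∧ e.1 ∉ predF G e.1 ∧
    ((S = (e.2 : G.V →₀ ℕ).support ∪ predF G e.1 ∧ T = insert e.1 S) ∨
     (T = (e.2 : G.V →₀ ℕ).support ∪ predF G e.1 ∧ S = insert e.1 T))

def EdgeRel (r : Option G.V → MvPolynomial G.V F) (S T : Finset G.V) : Prop :=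
  ∃ e, ESpec r e S T

lemma espec_symm {r : Option G.V → MvPolynomial G.V F} {e : EIdx G F r} {S T : Finset G.V}
    (h : ESpec r e S T) : ESpec r e T S :=
  ⟨h.1, h.2.1, h.2.2.symm⟩

lemma edgeRel_symm {r : Option G.V → MvPolynomial G.V F} {S T : Finset G.V}
    (h : EdgeRel r S T) : EdgeRel r T S := by
  obtain ⟨e, he⟩ := h; exact ⟨e, espec_symm he⟩

lemma card_support_le_deg (d : G.V →₀ ℕ) : d.support.card ≤ d.sum fun _ e => e := by
  rw [Finsupp.sum, Finset.card_eq_sum_ones]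
  apply Finset.sum_le_sum
  intro v hv
  exact Nat.one_le_iff_ne_zero.mpr (Finsupp.mem_support_iff.mp hv)

lemma espec_card_bound {r : Option G.V → MvPolynomial G.V F} {e : EIdx G F r}
    {S T : Finset G.V} (h : ESpec r e S T) :
    S.card ≤ (r (some e.1) * G.pebAxiom F e.1).totalDegree ∧
    T.card ≤ (r (some e.1) * G.pebAxiom F e.1).totalDegree := by
  have hr : r (some e.1) ≠ 0 := by
    intro h0
    have h2 : (r (some e.1)).support.Nonempty := ⟨_, e.2.2⟩
    rw [h0] at h2
    simp at h2
  have htd := td_r_mul_pebAxiom (F := F) hr e.1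
  have hds : ((e.2 : G.V →₀ ℕ)).support.card ≤ (r (some e.1)).totalDegree :=
    le_trans (card_support_le_deg _) (MvPolynomial.le_totalDegree e.2.2)
  have hD : ((e.2 : G.V →₀ ℕ).support ∪ predF G e.1).card + 1 ≤
      (r (some e.1) * G.pebAxiom F e.1).totalDegree := by
    calc ((e.2 : G.V →₀ ℕ).support ∪ predF G e.1).card + 1
        ≤ ((e.2 : G.V →₀ ℕ).support.card + (predF G e.1).card) + 1 := by
          have := Finset.card_union_le ((e.2 : G.V →₀ ℕ)).support (predF G e.1)
          omega
      _ ≤ (r (some e.1)).totalDegree + ((predF G e.1).card + 1) := by omega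
      _ ≤ _ := htd
  have hci := Finset.card_insert_le e.1 ((e.2 : G.V →₀ ℕ).support ∪ predF G e.1)
  rcases h.2.2 with ⟨hS, hT⟩ | ⟨hT, hS⟩
  · rw [hT, hS]
    constructor <;> omega
  · rw [hS, hT]
    constructor <;> omega

lemma espec_revMove {r : Option G.V → MvPolynomial G.V F} {e : EIdx G F r}
    {S T : Finset G.V} (h : ESpec r e S T) : G.RevMove (S : Set G.V) (T : Set G.V) := by
  obtain ⟨hd, hp, hor⟩ := h
  set v := e.1
  set D := (e.2 : G.V →₀ ℕ).support ∪ predF G v with hD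
  have hvD : v ∉ D := by
    rw [hD, Finset.mem_union]
    rintro (h1 | h2)
    · exact hd h1
    · exact hp h2
  have hpD : G.pred v ⊆ (D : Set G.V) := by
    rw [← coe_predF]
    intro u hu
    rw [Finset.mem_coe, hD, Finset.mem_union]
    exact Or.inr (by exact_mod_cast hu)
  rcases hor with ⟨hS, hT⟩ | ⟨hT, hS⟩
  · -- placement: S = D, T = insert v D
    subst hS
    refine ⟨v, hpD, Or.inl ⟨by exact_mod_cast hvD, ?_⟩⟩
    rw [hT]
    exact Finset.coe_insert v D
  · -- removal: T = D, S = insert v D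
    subst hT
    refine ⟨v, ?_, Or.inr ⟨?_, ?_⟩⟩
    · refine hpD.trans ?_
      rw [hS]
      exact_mod_cast Finset.coe_subset.mpr (Finset.subset_insert v D)
    · rw [hS]
      exact_mod_cast Finset.mem_insert_self v D
    · rw [hS, Finset.coe_insert]
      exact (Set.insert_diff_self_of_notMem (by exact_mod_cast hvD)).symm

lemma exists_walk {α : Type*} {Rl : α → α → Prop} {x y : α}
    (h : Relation.ReflTransGen Rl x y) :
    ∃ (n : ℕ) (c : ℕ → α), c 0 = x ∧ c n = y ∧ ∀ i < n, Rl (c i) (c (i + 1)) := by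
  induction h with
  | refl => exact ⟨0, fun _ => x, rfl, rfl, fun i hi => absurd hi (by omega)⟩
  | @tail b y hab hby ih =>
    obtain ⟨n, c, h0, hn, hstep⟩ := ih
    refine ⟨n + 1, fun i => if i ≤ n then c i else y, by simp [h0], by simp, ?_⟩
    intro i hi
    by_cases h1 : i < n
    · have : i ≤ n := by omega
      have : i + 1 ≤ n := by omega
      simp only [if_pos ‹i ≤ n›, if_pos ‹i + 1 ≤ n›]
      exact hstep i h1
    · have hieq : i = n := by omega
      subst hieq
      simp only [le_refl, if_pos, if_neg (by omega : ¬ i + 1 ≤ i)]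
      rw [hn]
      exact hby

lemma splice_walk {α : Type*} {Rl : α → α → Prop} {x : α} {Z : α → Prop} {n i δ : ℕ}
    (c : ℕ → α) (hc0 : c 0 = x) (hstep : ∀ m < n, Rl (c m) (c (m + 1))) (hz : Z (c n))
    (hδ : 1 ≤ δ) (hle : i + δ ≤ n) (heq : c i = c (i + δ)) :
    ∃ c' : ℕ → α, c' 0 = x ∧ (∀ m < n - δ, Rl (c' m) (c' (m + 1))) ∧ Z (c' (n - δ)) := by
  refine ⟨fun m => if m ≤ i then c m else c (m + δ), by simp [hc0], ?_, ?_⟩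
  · intro m hm
    rcases lt_trichotomy m i with h1 | rfl | h1
    · simp only [if_pos (by omega : m ≤ i), if_pos (by omega : m + 1 ≤ i)]
      exact hstep m (by omega)
    · simp only [le_refl, if_pos, if_neg (by omega : ¬ m + 1 ≤ m)]
      rw [heq]
      have := hstep (m + δ) (by omega)
      have he : m + δ + 1 = m + 1 + δ := by omega
      rwa [he] at this
    · simp only [if_neg (by omega : ¬ m ≤ i), if_neg (by omega : ¬ m + 1 ≤ i)]
      have := hstep (m + δ) (by omega)
      have he : m + δ + 1 = m + 1 + δ := by omega
      rwa [he] at this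
  · by_cases h1 : n - δ ≤ i
    · have hieq : n - δ = i := by omega
      simp only [if_pos h1, hieq, heq]
      have h2 : i + δ = n := by omega
      rw [h2]
      simpa using hz
    · simp only [if_neg h1]
      have : n - δ + δ = n := by omega
      rwa [this]

end PebNS

namespace PebNS
open FinDigraph
variable {G : FinDigraph} [DecidableEq G.V] {F : Type} [Field F]

lemma exists_reachable (z : G.V) {r : Option G.V → MvPolynomial G.V F}
    {s' : G.V → MvPolynomial G.V F} (hacy : G.Acyclic)
    (hcert : IsNSCert (G.pebContradiction F z) r s') :
    ∃ R : Finset G.V, Relation.ReflTransGen (EdgeRel r) ∅ R ∧ z ∈ R := by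
  classical
  set χ : (G.V →₀ ℕ) → F :=
    fun d => if Relation.ReflTransGen (EdgeRel r) ∅ d.support then 1 else 0 with hχ
  have hphi := congrArg (phi χ) hcert
  rw [phi_add, phi_finsum, phi_finsum, phi_one, Fintype.sum_option] at hphi
  have hbool : ∀ j : G.V, phi χ (s' j * (X j ^ 2 - X j)) = 0 := by
    intro j
    have hXX : (X j ^ 2 - X j : MvPolynomial G.V F) =
        monomial (Finsupp.single j 2) 1 - monomial (Finsupp.single j 1) 1 := by
      rw [MvPolynomial.X_pow_eq_monomial]
      rfl
    rw [hXX]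
    apply phi_mul_diff
    intro d _
    have h2 : (d + Finsupp.single j 2).support = (d + Finsupp.single j 1).support := by
      rw [nat_support_add, nat_support_add,
        Finsupp.support_single_ne_zero _ (by norm_num : (2:ℕ) ≠ 0),
        Finsupp.support_single_ne_zero _ (by norm_num : (1:ℕ) ≠ 0)]
    simp only [hχ]
    rw [h2]
  have haxv : ∀ v : G.V, phi χ (r (some v) * G.pebContradiction F z (some v)) = 0 := by
    intro v
    have hvv := not_mem_predF_self (G := G) hacy v
    show phi χ (r (some v) * G.pebAxiom F v) = 0
    rw [pebAxiom_eq' v hvv]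
    apply phi_mul_diff
    intro d hd
    have hS1 : (d + eS (predF G v)).support = d.support ∪ predF G v := by
      rw [nat_support_add, eS_support]
    have hS2 : (d + eS (insert v (predF G v))).support =
        insert v (d.support ∪ predF G v) := by
      rw [nat_support_add, eS_support]
      ext u
      simp only [Finset.mem_union, Finset.mem_insert]
      tauto
    by_cases hvd : v ∈ d.support
    · have hins : insert v (d.support ∪ predF G v) = d.support ∪ predF G v :=
        Finset.insert_eq_self.mpr (Finset.mem_union_left _ hvd)
      simp only [hχ]
      rw [hS1, hS2, hins]
    · have hedge : EdgeRel r (d.support ∪ predF G v) (insert v (d.support ∪ predF G v)) :=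
        ⟨⟨v, ⟨d, hd⟩⟩, hvd, hvv, Or.inl ⟨rfl, rfl⟩⟩
      have hiff : Relation.ReflTransGen (EdgeRel r) ∅ (d.support ∪ predF G v) ↔
          Relation.ReflTransGen (EdgeRel r) ∅ (insert v (d.support ∪ predF G v)) :=
        ⟨fun h => h.tail hedge, fun h => h.tail (edgeRel_symm hedge)⟩
      simp only [hχ]
      rw [hS1, hS2]
      exact if_congr hiff rfl rfl
  have hz1 : phi χ (r none * G.pebContradiction F z none) = 1 := by
    have h1 : (∑ v, phi χ (r (some v) * G.pebContradiction F z (some v))) = 0 :=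
      Finset.sum_eq_zero (fun v _ => haxv v)
    have h2 : (∑ j, phi χ (s' j * (X j ^ 2 - X j))) = 0 :=
      Finset.sum_eq_zero (fun j _ => hbool j)
    have h3 : χ 0 = 1 := by
      simp only [hχ, Finsupp.support_zero]
      rw [if_pos Relation.ReflTransGen.refl]
    rw [h1, h2, h3] at hphi
    linear_combination hphi
  have hXz : G.pebContradiction F z none = monomial (Finsupp.single z 1) (1:F) := rfl
  rw [hXz, phi_mul_monomial] at hz1
  have hsne : (∑ d ∈ (r none).support,
      χ (d + Finsupp.single z 1) * MvPolynomial.coeff d (r none)) ≠ 0 := by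
    rw [hz1]; exact one_ne_zero
  obtain ⟨d, hd, hne⟩ := Finset.exists_ne_zero_of_sum_ne_zero hsne
  refine ⟨(d + Finsupp.single z 1).support, ?_, ?_⟩
  · by_contra hc
    apply hne
    simp only [hχ]
    rw [if_neg hc, zero_mul]
  · rw [Finsupp.mem_support_iff]
    simp [Finsupp.add_apply]

end PebNS

namespace PebNS
open FinDigraph
variable {G : FinDigraph} [DecidableEq G.V] {F : Type} [Field F]

lemma backward_dir (hacy : G.Acyclic) (z : G.V) (t s : ℕ)
    (h : ∃ (r : Option G.V → MvPolynomial G.V F) (s' : G.V → MvPolynomial G.V F),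
      IsNSCert (G.pebContradiction F z) r s' ∧
      nsSize (G.pebContradiction F z) r s' ≤ t + 1 ∧
      nsDegree (G.pebContradiction F z) r s' ≤ s) :
    ∃ t' ≤ t, ∃ P : ℕ → Set G.V, G.IsRevPebbling z t' P ∧ G.space t' P ≤ s := by
  classical
  obtain ⟨r, s', hcert, hsize, hdeg⟩ := h
  -- Step A : r none ≠ 0
  have hev0 : ∀ v : G.V,
      MvPolynomial.eval (fun _ : G.V => (1:F)) (G.pebContradiction F z (some v)) = 0 := by
    intro v
    show MvPolynomial.eval _ (G.pebAxiom F v) = 0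
    simp [pebAxiom]
  have hevz : MvPolynomial.eval (fun _ : G.V => (1:F)) (G.pebContradiction F z none) = 1 := by
    show MvPolynomial.eval _ (X z) = 1
    simp
  have hrn : r none ≠ 0 := by
    intro h0
    have hev := congrArg (MvPolynomial.eval (fun _ : G.V => (1:F))) hcert
    rw [IsNSCert] at hcert
    rw [map_add, map_sum, map_sum, map_one, Fintype.sum_option] at hev
    simp only [map_mul, map_sub, map_pow, MvPolynomial.eval_X, hev0, hevz, mul_zero, mul_one,
      one_pow, sub_self, Finset.sum_const_zero, add_zero] at hev
    rw [h0] at hev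
    simp at hev
  have hrn1 : 1 ≤ (r none).support.card := by
    rw [Nat.one_le_iff_ne_zero]
    intro h0
    exact hrn (MvPolynomial.support_eq_empty.mp (Finset.card_eq_zero.mp h0))
  -- Step B : size arithmetic
  have hp1 : (G.pebContradiction F z none).support.card = 1 := by
    show (X z : MvPolynomial G.V F).support.card = 1
    rw [MvPolynomial.support_X]; rfl
  have hp2 : ∀ v : G.V, (G.pebContradiction F z (some v)).support.card = 2 := fun v =>
    card_support_pebAxiom v (not_mem_predF_self hacy v)
  rw [nsSize, Fintype.sum_option, hp1] at hsize
  have hsum2 : (∑ v, (r (some v)).support.card *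
      (G.pebContradiction F z (some v)).support.card) =
      2 * ∑ v, (r (some v)).support.card := by
    rw [Finset.mul_sum]
    apply Finset.sum_congr rfl
    intro v _
    rw [hp2 v]; ring
  rw [hsum2] at hsize
  have hNt : 2 * (∑ v, (r (some v)).support.card) ≤ t := by omega
  -- Step C : reach z and pick a minimal walk
  obtain ⟨R, hR, hzR⟩ := exists_reachable z hacy hcert
  obtain ⟨n1, c1, hc10, hc1n, hstep1⟩ := exists_walk hR
  have hGood : ∃ n, ∃ c : ℕ → Finset G.V,
      c 0 = ∅ ∧ (∀ i < n, EdgeRel r (c i) (c (i + 1))) ∧ z ∈ c n :=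
    ⟨n1, c1, hc10, hstep1, by rw [hc1n]; exact hzR⟩
  set n₀ := Nat.find hGood with hn₀
  obtain ⟨c, hc0, hstep, hzn⟩ := Nat.find_spec hGood
  -- Step D : edge indices along the walk are pairwise distinct
  have hchoice : ∀ i : Fin n₀, ∃ e : EIdx G F r, ESpec r e (c i) (c (i + 1)) :=
    fun i => hstep i i.2
  choose f hf using hchoice
  have key : ∀ i j : ℕ, i < j → ∀ (hi : i < n₀) (hj : j < n₀),
      f ⟨i, hi⟩ = f ⟨j, hj⟩ → False := by
    intro i j hlt hi hj hije
    have hei := hf ⟨i, hi⟩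
    have hej := hf ⟨j, hj⟩
    rw [hije] at hei
    set e := f ⟨j, hj⟩ with he
    set D := (e.2 : G.V →₀ ℕ).support ∪ predF G e.1 with hD
    have hsplice : ∀ δ : ℕ, 1 ≤ δ → i + δ ≤ n₀ → c i = c (i + δ) → False := by
      intro δ h1 h2 h3
      obtain ⟨c', hc'0, hc'step, hc'z⟩ := splice_walk (Z := fun S => z ∈ S)
        c hc0 hstep hzn h1 h2 h3
      have hlt' : n₀ - δ < n₀ := by omega
      exact Nat.find_min hGood hlt' ⟨c', hc'0, hc'step, hc'z⟩
    rcases hei.2.2 with ⟨hi1, hi2⟩ | ⟨hi1, hi2⟩ <;>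
      rcases hej.2.2 with ⟨hj1, hj2⟩ | ⟨hj1, hj2⟩
    · -- c i = D = c j
      refine hsplice (j - i) (by omega) (by omega) ?_
      have : i + (j - i) = j := by omega
      rw [this, hi1, hj1]
    · -- c i = D = c (j+1)
      refine hsplice (j + 1 - i) (by omega) (by omega) ?_
      have : i + (j + 1 - i) = j + 1 := by omega
      rw [this, hi1, hj1]
    · -- c i = insert e.1 D = c (j+1) : hi2 : c i = insert e.1 (c (i+1)), hi1 : c (i+1) = D
      refine hsplice (j + 1 - i) (by omega) (by omega) ?_
      have : i + (j + 1 - i) = j + 1 := by omega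
      rw [this, hi2, hi1, hj2, hj1]
    · -- c i = insert e.1 D = c j
      refine hsplice (j - i) (by omega) (by omega) ?_
      have : i + (j - i) = j := by omega
      rw [this, hi2, hi1, hj2, hj1]
  have hinj : Function.Injective f := by
    intro i j hij
    rcases lt_trichotomy (i : ℕ) (j : ℕ) with hlt | heq | hlt
    · exact absurd (key i j hlt i.2 j.2 hij) (fun h => h)
    · exact Fin.ext heq
    · exact absurd (key j i hlt j.2 i.2 hij.symm) (fun h => h)
  have hn0N : n₀ ≤ ∑ v, (r (some v)).support.card := by
    calc n₀ = Fintype.card (Fin n₀) := (Fintype.card_fin n₀).symm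
      _ ≤ Fintype.card (EIdx G F r) := Fintype.card_le_of_injective f hinj
      _ = ∑ v, (r (some v)).support.card := by
          rw [Fintype.card_sigma]
          apply Finset.sum_congr rfl
          intro v _
          exact Fintype.card_coe _
  -- Step E : space bound along the walk
  have hcards : ∀ m, m ≤ n₀ → (c m).card ≤ s := by
    intro m hm
    rcases Nat.eq_zero_or_pos m with rfl | hpos
    · rw [hc0]; simp
    · have hm1 : m - 1 < n₀ := by omega
      have hsp := hf ⟨m - 1, hm1⟩
      have hb := (espec_card_bound hsp).2
      rw [show (m - 1 : ℕ) + 1 = m from by omega] at hb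
      refine le_trans hb (le_trans ?_ hdeg)
      rw [nsDegree]
      refine le_trans ?_ (le_max_left _ _)
      exact Finset.le_sup (f := fun i => (r i * G.pebContradiction F z i).totalDegree)
        (Finset.mem_univ (some (f ⟨m - 1, hm1⟩).1))
  -- Step F : assemble the pebbling
  refine ⟨2 * n₀, by omega, fun i => ((c (if i ≤ n₀ then i else 2 * n₀ - i) : Finset G.V) : Set G.V),
    ⟨?_, ?_, ⟨n₀, by omega, ?_⟩, ?_⟩, ?_⟩
  · show ((c (if 0 ≤ n₀ then 0 else 2 * n₀ - 0) : Finset G.V) : Set G.V) = ∅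
    rw [if_pos (Nat.zero_le _), hc0, Finset.coe_empty]
  · show ((c (if 2 * n₀ ≤ n₀ then 2 * n₀ else 2 * n₀ - (2 * n₀)) : Finset G.V) : Set G.V) = ∅
    have harg : (if 2 * n₀ ≤ n₀ then 2 * n₀ else 2 * n₀ - (2 * n₀)) = 0 := by
      split <;> omega
    rw [harg, hc0, Finset.coe_empty]
  · show z ∈ ((c (if n₀ ≤ n₀ then n₀ else 2 * n₀ - n₀) : Finset G.V) : Set G.V)
    rw [if_pos le_rfl]
    exact Finset.mem_coe.mpr hzn
  · intro i hi
    by_cases hc1 : i + 1 ≤ n₀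
    · have e1 : (if i ≤ n₀ then i else 2 * n₀ - i) = i := if_pos (by omega)
      have e2 : (if i + 1 ≤ n₀ then i + 1 else 2 * n₀ - (i + 1)) = i + 1 := if_pos hc1
      show G.RevMove ((c (if i ≤ n₀ then i else 2 * n₀ - i) : Finset G.V) : Set G.V)
        ((c (if i + 1 ≤ n₀ then i + 1 else 2 * n₀ - (i + 1)) : Finset G.V) : Set G.V)
      rw [e1, e2]
      exact espec_revMove (hf ⟨i, by omega⟩)
    · have hin : n₀ ≤ i := by omega
      have hn1 : 1 ≤ n₀ := by omega
      set m := 2 * n₀ - (i + 1) with hm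
      have hmlt : m < n₀ := by omega
      have e1 : c (if i ≤ n₀ then i else 2 * n₀ - i) = c (m + 1) := by
        split
        · congr 1; omega
        · congr 1; omega
      have e2 : c (if i + 1 ≤ n₀ then i + 1 else 2 * n₀ - (i + 1)) = c m :=
        by rw [if_neg (by omega)]
      show G.RevMove ((c (if i ≤ n₀ then i else 2 * n₀ - i) : Finset G.V) : Set G.V)
        ((c (if i + 1 ≤ n₀ then i + 1 else 2 * n₀ - (i + 1)) : Finset G.V) : Set G.V)
      rw [e1, e2]
      have hsp := hf ⟨m, hmlt⟩
      exact espec_revMove (espec_symm hsp)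
  · rw [space]
    apply Finset.sup_le
    intro i _
    show ((c (if i ≤ n₀ then i else 2 * n₀ - i) : Finset G.V) : Set G.V).ncard ≤ s
    rw [Set.ncard_coe_finset]
    apply hcards
    split <;> omega

end PebNS

/-- For any finite DAG `G` with unique sink `z` and any field `F`:
`G` has a reversible pebbling with time at most `t` and space at most `s` if and only if the
pebbling contradiction of `G` has a Nullstellensatz refutation over `F` of size at most `t + 1`
and degree at most `s`. -/
theorem pebbling_iff_nullstellensatz (G : FinDigraph) (hacy : G.Acyclic) (z : G.V)
    (hz : G.UniqueSink z) (F : Type) [Field F] (t s : ℕ) :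
    (∃ t' ≤ t, ∃ P : ℕ → Set G.V, G.IsRevPebbling z t' P ∧ G.space t' P ≤ s) ↔
    (∃ (r : Option G.V → MvPolynomial G.V F) (s' : G.V → MvPolynomial G.V F),
      IsNSCert (G.pebContradiction F z) r s' ∧
      nsSize (G.pebContradiction F z) r s' ≤ t + 1 ∧
      nsDegree (G.pebContradiction F z) r s' ≤ s) := by
  classical
  constructor
  · exact PebNS.forward_dir hacy z t s
  · exact PebNS.backward_dir hacy z t s
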